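/- arXiv:2111.08356 — 4 statements merged into one kernel-verified Lean document; each statement's English description precedes it below -/
import Mathlib

section
/- Let E and F be real normed vector spaces, X a type, n ≥ 1 a natural number, φ : X → E a map with ‖φ(x)‖ ≤ B for all x ∈ X (B ≥ 0), and ψ : E → F a linear map that is Lipschitz with constant L ≥ 0. Define the deep-set encoder g(D) = ψ((1/n) • ∑_{i=1}^n φ(D i)) for D : Fin n → X. Then for any two adjacent datasets D, D' : Fin n → X (i.e., there is an index j with D i = D' i for all i ≠ j), we have ‖g(D) − g(D')‖ ≤ (2/n) · L · B. -/
open Finset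

/-- Lemma 1 of the paper: the sensitivity of a deep-set encoder
`g(D) = ψ((1/n) • ∑ i, φ (D i))`, with `ψ` linear and `L`-Lipschitz and `φ`
bounded in norm by `B`, is at most `(2/n) · L · B` over adjacent datasets. -/
theorem deepset_encoder_sensitivity
    {E F : Type*} [NormedAddCommGroup E] [NormedSpace ℝ E]
    [NormedAddCommGroup F] [NormedSpace ℝ F]
    {X : Type*} {n : ℕ} (hn : 1 ≤ n)
    (φ : X → E) (B : ℝ) (hB : 0 ≤ B) (hφ : ∀ x : X, ‖φ x‖ ≤ B)
    (ψ : E →ₗ[ℝ] F) (L : ℝ) (hL : 0 ≤ L)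
    (hψ : ∀ u v : E, ‖ψ u - ψ v‖ ≤ L * ‖u - v‖)
    (g : (Fin n → X) → F)
    (hg : ∀ D : Fin n → X, g D = ψ ((1 / (n : ℝ)) • ∑ i : Fin n, φ (D i)))
    (D D' : Fin n → X)
    (hadj : ∃ j : Fin n, ∀ i : Fin n, i ≠ j → D i = D' i) :
    ‖g D - g D'‖ ≤ (2 / (n : ℝ)) * L * B := by
  obtain ⟨j, hj⟩ := hadj
  have hnpos : (0:ℝ) < n := by exact_mod_cast hn
  have hsum : (∑ i : Fin n, φ (D i)) - (∑ i : Fin n, φ (D' i))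
      = φ (D j) - φ (D' j) := by
    rw [← Finset.sum_sub_distrib]
    rw [Finset.sum_eq_single j]
    · intro i _ hi; rw [hj i hi]; simp
    · simp
  have key : ‖(1 / (n : ℝ)) • ∑ i : Fin n, φ (D i)
      - (1 / (n : ℝ)) • ∑ i : Fin n, φ (D' i)‖ ≤ (2 / (n : ℝ)) * B := by
    rw [← smul_sub, hsum, norm_smul]
    have h1 : ‖φ (D j) - φ (D' j)‖ ≤ 2 * B := by
      calc ‖φ (D j) - φ (D' j)‖ ≤ ‖φ (D j)‖ + ‖φ (D' j)‖ := norm_sub_le _ _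
      _ ≤ B + B := add_le_add (hφ _) (hφ _)
      _ = 2 * B := by ring
    have : ‖(1:ℝ) / n‖ = 1 / n := by
      rw [Real.norm_eq_abs, abs_of_pos (by positivity)]
    rw [this]
    calc (1 / (n:ℝ)) * ‖φ (D j) - φ (D' j)‖ ≤ (1 / n) * (2 * B) := by
          apply mul_le_mul_of_nonneg_left h1 (by positivity)
      _ = (2 / n) * B := by ring
  rw [hg D, hg D']
  calc ‖ψ _ - ψ _‖ ≤ L * ‖(1 / (n : ℝ)) • ∑ i : Fin n, φ (D i)
        - (1 / (n : ℝ)) • ∑ i : Fin n, φ (D' i)‖ := hψ _ _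
    _ ≤ L * ((2 / n) * B) := mul_le_mul_of_nonneg_left key hL
    _ = (2 / n) * L * B := by ring
end

section
/- Let E and F be real normed vector spaces, X a type, φ : X → E a map with ‖φ(x)‖ ≤ B for all x ∈ X (B ≥ 0), and ψ : E → F a linear map that is Lipschitz with constant L ≥ 0. For a finite multiset s over X with card(s) = n ≥ 1, define g(s) = ψ((1/n) • (sum of φ over the elements of s, with multiplicity)). Then for any two multisets s, t over X of the same cardinality n that differ in exactly one element (i.e., there exist a, b ∈ X and a multiset u with s = a ::ₘ u and t = b ::ₘ u), we have ‖g(s) − g(t)‖ ≤ (2/n) · L · B. -/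
/-- Lemma 1 of the paper for unordered datasets (multisets): the deep-set encoder
`g(s) = ψ((1/n) • (s.map φ).sum)`, with `ψ` linear and `L`-Lipschitz and `φ`
bounded in norm by `B`, changes by at most `(2/n) · L · B` when a single element
of the size-`n` dataset is replaced. -/
theorem deepset_encoder_sensitivity_multiset
    {E F : Type*} [NormedAddCommGroup E] [NormedSpace ℝ E]
    [NormedAddCommGroup F] [NormedSpace ℝ F]
    {X : Type*} {n : ℕ} (hn : 1 ≤ n)
    (φ : X → E) (B : ℝ) (hB : 0 ≤ B) (hφ : ∀ x : X, ‖φ x‖ ≤ B)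
    (ψ : E →ₗ[ℝ] F) (L : ℝ) (hL : 0 ≤ L)
    (hψ : ∀ u v : E, ‖ψ u - ψ v‖ ≤ L * ‖u - v‖)
    (g : Multiset X → F)
    (hg : ∀ s : Multiset X, g s = ψ ((1 / (n : ℝ)) • (s.map φ).sum))
    (s t : Multiset X)
    (hs : Multiset.card s = n) (ht : Multiset.card t = n)
    (hadj : ∃ (a b : X) (u : Multiset X), s = a ::ₘ u ∧ t = b ::ₘ u) :
    ‖g s - g t‖ ≤ (2 / (n : ℝ)) * L * B := by
  obtain ⟨a, b, u, rfl, rfl⟩ := hadj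
  have hn0 : (0:ℝ) < n := by exact_mod_cast hn
  rw [hg, hg]
  calc ‖ψ ((1 / (n : ℝ)) • ((a ::ₘ u).map φ).sum)
        - ψ ((1 / (n : ℝ)) • ((b ::ₘ u).map φ).sum)‖
      ≤ L * ‖(1 / (n : ℝ)) • ((a ::ₘ u).map φ).sum
            - (1 / (n : ℝ)) • ((b ::ₘ u).map φ).sum‖ := hψ _ _
    _ = L * ((1 / (n : ℝ)) * ‖φ a - φ b‖) := by
        rw [← smul_sub]
        simp [norm_smul, abs_of_pos (by positivity : (0:ℝ) < 1 / (n:ℝ))]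
    _ ≤ L * ((1 / (n : ℝ)) * (B + B)) := by
        gcongr
        calc ‖φ a - φ b‖ ≤ ‖φ a‖ + ‖φ b‖ := norm_sub_le _ _
          _ ≤ B + B := add_le_add (hφ a) (hφ b)
    _ = (2 / (n : ℝ)) * L * B := by ring
end

section
/- Let 0 < ε < 1, 0 < δ < 1, Δ > 0, and let a, b ∈ ℝ with |a − b| ≤ Δ. Set σ² = 2Δ² · log(1.25/δ) / ε². Then for every measurable set s ⊆ ℝ, the Gaussian measures with means a and b and variance σ² satisfy N(a, σ²)(s) ≤ e^ε · N(b, σ²)(s) + δ. -/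
open MeasureTheory ProbabilityTheory Real Set

lemma gpdf_even (v : NNReal) (x : ℝ) :
    gaussianPDFReal 0 v (-x) = gaussianPDFReal 0 v x := by
  simp [gaussianPDFReal, neg_sq]

lemma gpdf_le_const (v : NNReal) (x : ℝ) :
    gaussianPDFReal 0 v x ≤ (Real.sqrt (2 * π * v))⁻¹ := by
  rw [gaussianPDFReal]
  have h1 : rexp (-(x - 0) ^ 2 / (2 * v)) ≤ 1 := by
    apply Real.exp_le_one_iff.2
    apply div_nonpos_of_nonpos_of_nonneg
    · simp [sq_nonneg]
    · positivity
  calc (Real.sqrt (2 * π * v))⁻¹ * rexp (-(x - 0) ^ 2 / (2 * v))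
      ≤ (Real.sqrt (2 * π * v))⁻¹ * 1 := by
        apply mul_le_mul_of_nonneg_left h1 (by positivity)
    _ = _ := by ring

lemma tail_half (v : NNReal) (hv : v ≠ 0) :
    ∫ x in Ioi (0:ℝ), gaussianPDFReal 0 v x = 1/2 := by
  have hint := integrable_gaussianPDFReal 0 v
  have hsym : ∫ x in Iic (0:ℝ), gaussianPDFReal 0 v x
      = ∫ x in Ioi (0:ℝ), gaussianPDFReal 0 v x := by
    have h := integral_comp_neg_Ioi (0:ℝ) (gaussianPDFReal 0 v)
    simp_rw [gpdf_even] at h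
    rw [neg_zero] at h
    exact h.symm
  have hunion : (∫ x in Iic (0:ℝ), gaussianPDFReal 0 v x)
      + ∫ x in Ioi (0:ℝ), gaussianPDFReal 0 v x = 1 := by
    rw [← integral_gaussianPDFReal_eq_one 0 hv]
    rw [← MeasureTheory.setIntegral_union (Set.Iic_disjoint_Ioi le_rfl) measurableSet_Ioi
      hint.integrableOn hint.integrableOn]
    rw [Set.Iic_union_Ioi, Measure.restrict_univ]
  rw [hsym] at hunion
  linarith

lemma tail_le_of_nonneg (v : NNReal) (hv : v ≠ 0) {q : ℝ} (hq : 0 ≤ q) :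
    ∫ x in Ioi q, gaussianPDFReal 0 v x ≤ 1/2 := by
  rw [← tail_half v hv]
  apply setIntegral_mono_set (integrable_gaussianPDFReal 0 v).integrableOn
    (ae_of_all _ fun x => gaussianPDFReal_nonneg 0 v x)
  exact HasSubset.Subset.eventuallyLE (Ioi_subset_Ioi hq)

lemma tail_le_of_neg (v : NNReal) (hv : v ≠ 0) {q : ℝ} (hq : q < 0) :
    ∫ x in Ioi q, gaussianPDFReal 0 v x ≤ 1/2 + (-q) * (Real.sqrt (2 * π * v))⁻¹ := by
  have hint := integrable_gaussianPDFReal 0 v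
  have hunion : (∫ x in Ioi q, gaussianPDFReal 0 v x)
      = (∫ x in Ioc q 0, gaussianPDFReal 0 v x) + ∫ x in Ioi (0:ℝ), gaussianPDFReal 0 v x := by
    rw [← MeasureTheory.setIntegral_union (Set.Ioc_disjoint_Ioi le_rfl) measurableSet_Ioi
      hint.integrableOn hint.integrableOn]
    rw [Set.Ioc_union_Ioi_eq_Ioi hq.le]
  rw [hunion]
  have h1 : (∫ x in Ioc q 0, gaussianPDFReal 0 v x)
      ≤ (-q) * (Real.sqrt (2 * π * v))⁻¹ := by
    calc (∫ x in Ioc q 0, gaussianPDFReal 0 v x)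
        ≤ ∫ _x in Ioc q 0, (Real.sqrt (2 * π * v))⁻¹ := by
          apply setIntegral_mono_on hint.integrableOn (integrableOn_const (by simp))
            measurableSet_Ioc
          exact fun x _ => gpdf_le_const v x
      _ = (-q) * (Real.sqrt (2 * π * v))⁻¹ := by
          rw [setIntegral_const]
          rw [measureReal_def, Real.volume_Ioc]
          rw [ENNReal.toReal_ofReal (by linarith)]
          simp
  have h2 := tail_le_of_nonneg v hv (le_refl 0)
  linarith

lemma tail_mills (v : NNReal) (hv : 0 < (v:ℝ)) {q : ℝ} (hq : 0 < q) :
    ∫ x in Ioi q, gaussianPDFReal 0 v x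
      ≤ (Real.sqrt (2 * π * v))⁻¹ * rexp (-q^2 / (2*v)) * (v / q) := by
  have hD : 0 < q / (v:ℝ) := by positivity
  set C : ℝ := (Real.sqrt (2 * π * v))⁻¹ with hC
  have hCpos : 0 < C := by rw [hC]; positivity
  set K : ℝ := C * rexp (-q^2 / (2*v)) * rexp (q / v * q) with hK
  have hpoint : ∀ x ∈ Ioi q, gaussianPDFReal 0 v x ≤ K * rexp (-(q/v) * x) := by
    intro x hx
    have h2v : (0:ℝ) < 2*v := by positivity
    have hexp : rexp (-(x-0)^2/(2*(v:ℝ)))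
        ≤ rexp (-q^2/(2*(v:ℝ))) * rexp (q/(v:ℝ)*q) * rexp (-(q/(v:ℝ))*x) := by
      rw [← Real.exp_add, ← Real.exp_add]
      apply Real.exp_le_exp.2
      have hdiff : -(x-0)^2/(2*(v:ℝ)) - (-q^2/(2*(v:ℝ)) + q/(v:ℝ)*q + -(q/(v:ℝ))*x)
          = -((x-q)^2/(2*(v:ℝ))) := by
        field_simp
        ring
      have hnn : 0 ≤ (x-q)^2/(2*(v:ℝ)) := div_nonneg (sq_nonneg _) h2v.le
      linarith
    calc gaussianPDFReal 0 v x = C * rexp (-(x-0)^2/(2*(v:ℝ))) := rfl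
      _ ≤ C * (rexp (-q^2/(2*(v:ℝ))) * rexp (q/(v:ℝ)*q) * rexp (-(q/(v:ℝ))*x)) :=
          mul_le_mul_of_nonneg_left hexp hCpos.le
      _ = K * rexp (-(q/(v:ℝ))*x) := by rw [hK]; ring
  have hintK : IntegrableOn (fun x => K * rexp (-(q/v) * x)) (Ioi q) := by
    apply Integrable.const_mul
    exact exp_neg_integrableOn_Ioi q hD
  calc ∫ x in Ioi q, gaussianPDFReal 0 v x
      ≤ ∫ x in Ioi q, K * rexp (-(q/v) * x) := by
        apply setIntegral_mono_on (integrable_gaussianPDFReal 0 v).integrableOn hintK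
          measurableSet_Ioi hpoint
    _ = K * ∫ x in Ioi q, rexp (-(q/v) * x) := by rw [integral_const_mul]
    _ = K * ((q/v)⁻¹ * rexp (-(q/v * q))) := by
        congr 1
        have h := integral_comp_mul_left_Ioi (fun y => rexp (-y)) q hD
        simp only [smul_eq_mul] at h
        simp_rw [← neg_mul] at h ⊢
        rw [h, integral_exp_neg_Ioi]
        ring_nf
    _ = C * rexp (-q^2 / (2*v)) * (v / q) := by
        rw [hK, Real.exp_neg]
        field_simp

set_option maxHeartbeats 4000000 in
lemma tail_main (ε δ Δ : ℝ) (hε : 0 < ε) (hε1 : ε < 1) (hδ : 0 < δ) (hδ1 : δ < 1) (hΔ : 0 < Δ)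
    (v : NNReal) (hv : (v:ℝ) = 2 * Δ ^ 2 * Real.log (1.25 / δ) / ε ^ 2) :
    gaussianReal 0 v (Ioi ((v:ℝ) * ε / Δ - Δ / 2)) ≤ ENNReal.ofReal δ := by
  have hδε' : (0:ℝ) < 1.25 / δ := by positivity
  set L := Real.log (1.25 / δ) with hLdef
  have hL02 : 0.2 < L := by
    rw [hLdef, Real.lt_log_iff_exp_lt hδε']
    have h1 : (0.8:ℝ) ≤ rexp (-0.2) := by have := Real.add_one_le_exp (-0.2:ℝ); linarith
    have h2 : rexp 0.2 * rexp (-0.2) = 1 := by rw [← Real.exp_add]; norm_num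
    have h3 : rexp 0.2 ≤ 1.25 := by nlinarith [Real.exp_pos (0.2:ℝ)]
    have h4 : (1.25:ℝ) < 1.25 / δ := by rw [lt_div_iff₀ hδ]; nlinarith
    linarith
  have hLpos : 0 < L := by linarith
  have hvpos : 0 < (v:ℝ) := by
    rw [hv]
    exact div_pos (mul_pos (by positivity) hLpos) (pow_pos hε 2)
  have hvne : v ≠ 0 := by
    intro h
    rw [h] at hvpos
    simp at hvpos
  have hexpL : rexp (-L) = δ / 1.25 := by
    rw [hLdef, Real.exp_neg, Real.exp_log hδε', inv_div]
  set s := Real.sqrt (2 * L) with hsdef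
  have hs2 : s ^ 2 = 2 * L := Real.sq_sqrt (by linarith)
  have hspos : 0 < s := Real.sqrt_pos.2 (by linarith)
  have hw : Real.sqrt v = Δ * s / ε := by
    have h : (Δ * s / ε) ^ 2 = (v:ℝ) := by
      rw [hv, div_pow, mul_pow, hs2]; ring
    rw [← h, Real.sqrt_sq (by positivity)]
  have hsqrt2pi : (2.5:ℝ) ≤ Real.sqrt (2 * π) := by
    rw [show (2.5:ℝ) = Real.sqrt (2.5^2) from (Real.sqrt_sq (by norm_num)).symm]
    apply Real.sqrt_le_sqrt
    nlinarith [Real.pi_gt_d6]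
  have hCsplit : Real.sqrt (2 * π * (v:ℝ)) = Real.sqrt (2 * π) * Real.sqrt v := by
    rw [Real.sqrt_mul (by positivity)]
  set m₀ : ℝ := (v:ℝ) * ε / Δ - Δ / 2 with hm₀def
  have hm0eq : m₀ = Δ * (4 * L - ε) / (2 * ε) := by
    rw [hm₀def, hv]; field_simp; ring
  rw [gaussianReal_apply_eq_integral 0 hvne]
  suffices h : ∫ x in Ioi m₀, gaussianPDFReal 0 v x ≤ δ from ENNReal.ofReal_le_ofReal h
  by_cases hδhalf : δ ≤ 1/2
  · -- Mills case
    have hL9 : 0.9 ≤ L := by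
      rw [hLdef, Real.le_log_iff_exp_le hδε']
      have h01 : (1.1:ℝ) ≤ rexp 0.1 := by have := Real.add_one_le_exp (0.1:ℝ); linarith
      have h1 : rexp 0.9 * rexp 0.1 = rexp 1 := by rw [← Real.exp_add]; norm_num
      have h2 : rexp 0.9 ≤ 2.5 := by nlinarith [Real.exp_pos (0.9:ℝ), Real.exp_one_lt_d9]
      have h3 : (2.5:ℝ) ≤ 1.25 / δ := by rw [le_div_iff₀ hδ]; nlinarith
      linarith
    have hsge : 1.34 ≤ s := by
      by_contra hcon
      push_neg at hcon
      nlinarith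
    have hm0pos : 0 < m₀ := by
      rw [hm0eq]
      apply div_pos (by nlinarith) (by linarith)
    have hmills := tail_mills v hvpos hm0pos
    have hexpb : rexp (-m₀^2 / (2*(v:ℝ))) ≤ rexp (1/2) * (δ / 1.25) := by
      rw [← hexpL, ← Real.exp_add]
      apply Real.exp_le_exp.2
      have he : m₀^2 / (2*(v:ℝ)) = (4*L - ε)^2 / (16*L) := by
        rw [hm0eq, hv]; field_simp; ring
      have he2 : L - 1/2 ≤ (4*L - ε)^2 / (16*L) := by
        rw [le_div_iff₀ (by linarith : (0:ℝ) < 16*L)]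
        nlinarith [sq_nonneg ε]
      have hng : -m₀^2 / (2*(v:ℝ)) = -(m₀^2 / (2*(v:ℝ))) := neg_div _ _
      rw [hng, he]
      linarith
    have hexphalf : rexp (1/2) ≤ 1.65 := by
      have h1 : rexp (1/2) * rexp (1/2) = rexp 1 := by rw [← Real.exp_add]; norm_num
      nlinarith [Real.exp_pos (1/2:ℝ), Real.exp_one_lt_d9]
    calc ∫ x in Ioi m₀, gaussianPDFReal 0 v x
        ≤ (Real.sqrt (2 * π * v))⁻¹ * rexp (-m₀^2 / (2*v)) * ((v:ℝ) / m₀) := hmills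
      _ ≤ (Real.sqrt (2 * π * v))⁻¹ * (rexp (1/2) * (δ / 1.25)) * ((v:ℝ) / m₀) := by
          apply mul_le_mul_of_nonneg_right _ (by positivity)
          apply mul_le_mul_of_nonneg_left hexpb (by positivity)
      _ ≤ δ := by
          rw [hCsplit, hw]
          have hveq : (v:ℝ) = (Δ * s / ε)^2 := by
            rw [hv, div_pow, mul_pow, hs2]; ring
          rw [hveq, hm0eq]
          have ht : (0:ℝ) < Δ * s / ε := by positivity
          set t := Δ * s / ε with htdef
          set M := Δ * (4*L - ε) / (2*ε) with hMdef
          have hMpos : 0 < M := by rw [hm0eq] at hm0pos; exact hm0pos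
          have heq : (Real.sqrt (2*π) * t)⁻¹ * (rexp (1/2) * (δ / 1.25)) * (t^2 / M)
              = (rexp (1/2) * δ * t) / (1.25 * Real.sqrt (2*π) * M) := by
            field_simp
          rw [heq, div_le_iff₀ (by positivity)]
          have hcore : rexp (1/2) * s ≤ 0.625 * Real.sqrt (2*π) * (4*L - ε) := by
            have h1 : rexp (1/2) * s ≤ 1.65 * s :=
              mul_le_mul_of_nonneg_right hexphalf hspos.le
            have h2 : 0 ≤ 4*L - ε := by nlinarith
            have h3 : 2.5 * (4*L - ε) ≤ Real.sqrt (2*π) * (4*L - ε) :=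
              mul_le_mul_of_nonneg_right hsqrt2pi h2
            nlinarith
          have hkey : rexp (1/2) * t ≤ 1.25 * Real.sqrt (2*π) * M := by
            rw [htdef, hMdef]
            have he1 : rexp (1/2) * (Δ * s / ε) = (rexp (1/2) * s) * (Δ / ε) := by
              field_simp
            have he2 : 1.25 * Real.sqrt (2*π) * (Δ * (4*L - ε) / (2*ε))
                = (0.625 * Real.sqrt (2*π) * (4*L - ε)) * (Δ / ε) := by
              field_simp; ring
            rw [he1, he2]
            exact mul_le_mul_of_nonneg_right hcore (by positivity)
          nlinarith [mul_le_mul_of_nonneg_left hkey hδ.le, Real.exp_pos (1/2:ℝ), ht]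
  · push_neg at hδhalf
    rcases le_or_gt 0 m₀ with hm0 | hm0
    · have := tail_le_of_nonneg v hvne hm0
      linarith
    · have hbound := tail_le_of_neg v hvne hm0
      have h4L : 4*L < ε := by
        by_contra hcon
        push_neg at hcon
        rw [hm0eq] at hm0
        have : 0 ≤ Δ * (4*L - ε) / (2*ε) := by
          apply div_nonneg (mul_nonneg hΔ.le (by linarith)) (by linarith)
        linarith
      have hδlb : 1.25 * (1 - L) ≤ δ := by
        have h1 : 1 - L ≤ rexp (-L) := by have := Real.add_one_le_exp (-L); linarith
        rw [hexpL] at h1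
        norm_num at h1 ⊢
        linarith
      have hs05 : s^2 < 1/2 := by rw [hs2]; linarith
      have hsub : 0.63 ≤ s := by
        by_contra hcon
        push_neg at hcon
        nlinarith
      have hCv : (Real.sqrt (2 * π * (v:ℝ)))⁻¹ = (Real.sqrt (2*π) * (Δ * s / ε))⁻¹ := by
        rw [hCsplit, hw]
      have hnegm : -m₀ = Δ * (ε - 2*s^2) / (2*ε) := by
        rw [hm0eq, hs2]; field_simp; ring
      have key : (-m₀) * (Real.sqrt (2 * π * (v:ℝ)))⁻¹
          = (ε - 2*s^2) / (2 * Real.sqrt (2*π) * s) := by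
        rw [hCv, hnegm]
        field_simp
      have hnum : 0 < ε - 2*s^2 := by rw [hs2]; linarith
      have hstep : (ε - 2*s^2) / (2 * Real.sqrt (2*π) * s) ≤ (1 - 2*s^2) / (5 * s) :=
        div_le_div₀ (show (0:ℝ) ≤ 1 - 2*s^2 by linarith)
          (show ε - 2*s^2 ≤ 1 - 2*s^2 by linarith)
          (show (0:ℝ) < 5*s by positivity)
          (by
            have h58 := mul_le_mul_of_nonneg_right hsqrt2pi hspos.le
            show 5*s ≤ 2 * Real.sqrt (2*π) * s
            linarith)
      have hfinal : (1 - 2*s^2) / (5 * s) ≤ 1.25 * (1 - s^2/2) - 1/2 := by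
        rw [div_le_iff₀ (by positivity)]
        nlinarith [mul_le_mul_of_nonneg_left hs05.le hspos.le]
      have hLs : L = s^2 / 2 := by linarith [hs2]
      linarith [key, hbound, hstep, hfinal, hδlb]

lemma gauss_sym (v : NNReal) (t : ℝ) :
    gaussianReal 0 v (Iio t) = gaussianReal 0 v (Ioi (-t)) := by
  have h1 : (⟨(-1:ℝ)^2, sq_nonneg _⟩ : NNReal) = 1 := by
    ext; norm_num
  have hmap : (gaussianReal 0 v).map (fun x : ℝ => (-1:ℝ) * x) = gaussianReal 0 v := by
    rw [gaussianReal_map_const_mul (-1 : ℝ)]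
    congr 1
    · ring
    · ext; simp
  have hpre : (fun x : ℝ => (-1:ℝ) * x) ⁻¹' (Iio t) = Ioi (-t) := by
    ext x
    simp only [mem_preimage, mem_Iio, mem_Ioi]
    constructor <;> intro h <;> linarith
  calc gaussianReal 0 v (Iio t)
      = ((gaussianReal 0 v).map (fun x : ℝ => (-1:ℝ) * x)) (Iio t) := by rw [hmap]
    _ = gaussianReal 0 v ((fun x : ℝ => (-1:ℝ) * x) ⁻¹' (Iio t)) :=
        Measure.map_apply (measurable_const_mul _) measurableSet_Iio
    _ = gaussianReal 0 v (Ioi (-t)) := by rw [hpre]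

lemma mono_aux (σ2 ε Δ u : ℝ) (hσ : 0 < σ2) (hε : 0 < ε) (hu : 0 < u) (huΔ : u ≤ Δ) :
    σ2 * ε / Δ - Δ / 2 ≤ (2 * σ2 * ε - u^2) / (2 * u) := by
  have hΔ : 0 < Δ := lt_of_lt_of_le hu huΔ
  have key : (2 * σ2 * ε - u^2) / (2 * u) = σ2 * ε / u - u / 2 := by
    field_simp
  have h1 : σ2 * ε / Δ ≤ σ2 * ε / u :=
    div_le_div_of_nonneg_left (by positivity) hu huΔ
  rw [key]
  linarith

set_option maxHeartbeats 1000000 in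
/-- The Gaussian mechanism guarantee of Dwork et al. (one-dimensional outputs):
with `σ² = 2Δ² log(1.25/δ) / ε²` and `|a − b| ≤ Δ`, for every measurable set `s`,
`N(a, σ²)(s) ≤ e^ε · N(b, σ²)(s) + δ`. -/
theorem gaussian_mechanism_dp
    (ε δ Δ : ℝ) (hε : 0 < ε) (hε1 : ε < 1) (hδ : 0 < δ) (hδ1 : δ < 1)
    (hΔ : 0 < Δ)
    (a b : ℝ) (hab : |a - b| ≤ Δ)
    (σ2 : NNReal) (hσ2 : (σ2 : ℝ) = 2 * Δ ^ 2 * Real.log (1.25 / δ) / ε ^ 2)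
    (s : Set ℝ) (hs : MeasurableSet s) :
    gaussianReal a σ2 s ≤ ENNReal.ofReal (Real.exp ε) * gaussianReal b σ2 s
      + ENNReal.ofReal δ := by
  have hδε' : (0:ℝ) < 1.25 / δ := by positivity
  have hLpos : 0 < Real.log (1.25 / δ) := by
    rw [Real.lt_log_iff_exp_lt hδε']
    calc rexp 0 = 1 := Real.exp_zero
      _ < 1.25 / δ := by rw [lt_div_iff₀ hδ]; nlinarith
  have hσpos : 0 < (σ2:ℝ) := by
    rw [hσ2]
    exact div_pos (mul_pos (by positivity) hLpos) (pow_pos hε 2)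
  have hσne : σ2 ≠ 0 := by
    intro h
    rw [h] at hσpos
    simp at hσpos
  set c : ℝ := a - b with hc
  set G : Set ℝ := {x : ℝ | c * (2*x - a - b) ≤ 2*(σ2:ℝ)*ε} with hG
  have hGm : MeasurableSet G := measurableSet_le (by fun_prop) measurable_const
  -- Step A : bounded-likelihood-ratio part
  have hA : gaussianReal a σ2 (s ∩ G)
      ≤ ENNReal.ofReal (Real.exp ε) * gaussianReal b σ2 s := by
    have hpoint : ∀ x ∈ s ∩ G,
        gaussianPDF a σ2 x ≤ ENNReal.ofReal (Real.exp ε) * gaussianPDF b σ2 x := by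
      intro x hx
      have hxG : c * (2*x - a - b) ≤ 2*(σ2:ℝ)*ε := hx.2
      rw [gaussianPDF, gaussianPDF, ← ENNReal.ofReal_mul (Real.exp_pos ε).le]
      apply ENNReal.ofReal_le_ofReal
      have hC : (0:ℝ) < (Real.sqrt (2 * π * (σ2:ℝ)))⁻¹ := by positivity
      have h2v : (0:ℝ) < 2*(σ2:ℝ) := by positivity
      have hexp : -(x-a)^2/(2*(σ2:ℝ)) ≤ ε + -(x-b)^2/(2*(σ2:ℝ)) := by
        have hdiff : -(x-a)^2/(2*(σ2:ℝ)) - (-(x-b)^2/(2*(σ2:ℝ)))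
            = (c * (2*x - a - b))/(2*(σ2:ℝ)) := by
          rw [hc]; field_simp; ring
        have hle : (c * (2*x - a - b))/(2*(σ2:ℝ)) ≤ ε := by
          rw [div_le_iff₀ h2v]; linarith
        linarith
      calc gaussianPDFReal a σ2 x
          = (Real.sqrt (2 * π * (σ2:ℝ)))⁻¹ * rexp (-(x-a)^2/(2*(σ2:ℝ))) := rfl
        _ ≤ (Real.sqrt (2 * π * (σ2:ℝ)))⁻¹ * rexp (ε + -(x-b)^2/(2*(σ2:ℝ))) := by
            apply mul_le_mul_of_nonneg_left (Real.exp_le_exp.2 hexp) hC.le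
        _ = Real.exp ε * gaussianPDFReal b σ2 x := by
            rw [Real.exp_add, gaussianPDFReal]
            ring
    calc gaussianReal a σ2 (s ∩ G) = ∫⁻ x in s ∩ G, gaussianPDF a σ2 x :=
          gaussianReal_apply a hσne _
      _ ≤ ∫⁻ x in s ∩ G, ENNReal.ofReal (Real.exp ε) * gaussianPDF b σ2 x :=
          setLIntegral_mono ((measurable_gaussianPDF b σ2).const_mul _) hpoint
      _ = ENNReal.ofReal (Real.exp ε) * ∫⁻ x in s ∩ G, gaussianPDF b σ2 x :=
          lintegral_const_mul _ (measurable_gaussianPDF b σ2)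
      _ ≤ ENNReal.ofReal (Real.exp ε) * ∫⁻ x in s, gaussianPDF b σ2 x :=
          mul_le_mul_right (lintegral_mono_set inter_subset_left) _
      _ = ENNReal.ofReal (Real.exp ε) * gaussianReal b σ2 s := by
          rw [gaussianReal_apply b hσne]
  -- Step B : the bad event has probability at most δ
  have hB : gaussianReal a σ2 Gᶜ ≤ ENNReal.ofReal δ := by
    have hGc : Gᶜ = {x : ℝ | 2*(σ2:ℝ)*ε < c * (2*x - a - b)} := by
      ext x
      simp only [hG, mem_compl_iff, mem_setOf_eq, not_le]
    by_cases hc0 : c = 0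
    · have hempty : {x : ℝ | 2*(σ2:ℝ)*ε < c * (2*x - a - b)} = ∅ := by
        ext x
        simp only [hc0, zero_mul, mem_setOf_eq, mem_empty_iff_false, iff_false, not_lt]
        positivity
      rw [hGc, hempty, measure_empty]
      exact zero_le
    · have hBm : MeasurableSet {x : ℝ | 2*(σ2:ℝ)*ε < c * (2*x - a - b)} :=
        measurableSet_lt measurable_const (by fun_prop)
      have hmapa : gaussianReal a σ2 = (gaussianReal 0 σ2).map (· + a) := by
        have h := gaussianReal_map_add_const (μ := 0) (v := σ2) a
        rw [zero_add] at h
        exact h.symm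
      rw [hGc, hmapa, Measure.map_apply (measurable_add_const a) hBm]
      have hpre : (· + a) ⁻¹' {x : ℝ | 2*(σ2:ℝ)*ε < c * (2*x - a - b)}
          = {y : ℝ | 2*(σ2:ℝ)*ε < c * (2*y + c)} := by
        ext y
        simp only [mem_preimage, mem_setOf_eq, hc]
        have heq : (a-b) * (2*(y+a) - a - b) = (a-b) * (2*y + (a-b)) := by ring
        rw [heq]
      rw [hpre]
      have htail := tail_main ε δ Δ hε hε1 hδ hδ1 hΔ σ2 hσ2
      rcases lt_or_gt_of_ne hc0 with hcneg | hcpos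
      · -- c < 0
        have huΔ : -c ≤ Δ := by
          rw [hc]
          calc -(a-b) ≤ |a-b| := neg_le_abs _
            _ ≤ Δ := hab
        have hIio : {y : ℝ | 2*(σ2:ℝ)*ε < c * (2*y + c)}
            = Iio ((2*(σ2:ℝ)*ε - c^2) / (2*c)) := by
          ext y
          simp only [mem_setOf_eq, mem_Iio]
          rw [lt_div_iff_of_neg (by linarith : 2*c < 0)]
          constructor <;> intro h <;> nlinarith
        rw [hIio, gauss_sym]
        have hflip : -((2*(σ2:ℝ)*ε - c^2) / (2*c)) = (2*(σ2:ℝ)*ε - (-c)^2) / (2*(-c)) := by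
          field_simp
        rw [hflip]
        refine le_trans (measure_mono (Ioi_subset_Ioi ?_)) htail
        exact mono_aux (σ2:ℝ) ε Δ (-c) hσpos hε (by linarith) huΔ
      · -- c > 0
        have huΔ : c ≤ Δ := by
          rw [hc]
          calc a - b ≤ |a-b| := le_abs_self _
            _ ≤ Δ := hab
        have hIoi : {y : ℝ | 2*(σ2:ℝ)*ε < c * (2*y + c)}
            = Ioi ((2*(σ2:ℝ)*ε - c^2) / (2*c)) := by
          ext y
          simp only [mem_setOf_eq, mem_Ioi]
          rw [div_lt_iff₀ (by linarith : (0:ℝ) < 2*c)]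
          constructor <;> intro h <;> nlinarith
        rw [hIoi]
        refine le_trans (measure_mono (Ioi_subset_Ioi ?_)) htail
        exact mono_aux (σ2:ℝ) ε Δ c hσpos hε hcpos huΔ
  calc gaussianReal a σ2 s
      ≤ gaussianReal a σ2 (s ∩ G) + gaussianReal a σ2 (s \ G) :=
        measure_le_inter_add_diff _ _ _
    _ ≤ gaussianReal a σ2 (s ∩ G) + gaussianReal a σ2 Gᶜ :=
        add_le_add_right (measure_mono (fun x hx => hx.2)) _
    _ ≤ ENNReal.ofReal (Real.exp ε) * gaussianReal b σ2 s + ENNReal.ofReal δ :=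
        add_le_add hA hB
end

section
/- Let E be a real normed vector space, X a type, n ≥ 1, φ : X → E a map with ‖φ(x)‖ ≤ B for all x ∈ X (B > 0), and ψ : E → ℝ a linear map that is Lipschitz with constant L > 0. Define the deep-set encoder g(D) = ψ((1/n) • ∑_{i=1}^n φ(D i)) for D : Fin n → X. Let 0 < ε < 1 and 0 < δ < 1, and set σ² = 2 · (2LB/n)² · log(1.25/δ) / ε². Then for any two adjacent datasets D, D' : Fin n → X (i.e., there is an index j with D i = D' i for all i ≠ j) and every measurable set s ⊆ ℝ, the Gaussian measures centered at the encoder outputs satisfy N(g(D), σ²)(s) ≤ e^ε · N(g(D'), σ²)(s) + δ. -/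
open MeasureTheory ProbabilityTheory Finset

section DPAuxLemmas
open MeasureTheory ProbabilityTheory Real
open scoped NNReal ENNReal

private lemma half_integral (μ : ℝ) (v : ℝ≥0) (hv : v ≠ 0) :
    ∫ x in Set.Ici μ, gaussianPDFReal μ v x = 1/2 := by
  have hmp : MeasurePreserving (· + μ) (volume : Measure ℝ) volume :=
    measurePreserving_add_right volume μ
  have hemb : MeasurableEmbedding (· + μ : ℝ → ℝ) :=
    (Homeomorph.addRight μ).isClosedEmbedding.measurableEmbedding
  have h := hmp.setIntegral_preimage_emb hemb (gaussianPDFReal μ v) (Set.Ici μ)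
  rw [← h]
  have hpre : (· + μ : ℝ → ℝ) ⁻¹' Set.Ici μ = Set.Ici 0 := by ext x; simp
  rw [hpre]
  have heq : ∀ x ∈ Set.Ici (0:ℝ), gaussianPDFReal μ v (x + μ) = gaussianPDFReal 0 v x := by
    intro x _; rw [gaussianPDFReal_add]; simp
  rw [setIntegral_congr_fun measurableSet_Ici heq]
  -- now value 1/2
  have hv' : (0:ℝ) < v := lt_of_le_of_ne v.2 (by exact_mod_cast hv.symm)
  have hs : (0:ℝ) < Real.sqrt (2 * π * v) := Real.sqrt_pos.2 (by positivity)
  rw [MeasureTheory.integral_Ici_eq_integral_Ioi]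
  have hfx : ∀ x : ℝ, gaussianPDFReal 0 v x = (√(2 * π * v))⁻¹ * Real.exp (-(2*(v:ℝ))⁻¹ * x^2) := by
    intro x; rw [gaussianPDFReal]; ring_nf
  simp_rw [hfx]
  rw [MeasureTheory.integral_const_mul, integral_gaussian_Ioi]
  have h2 : π / (2*(v:ℝ))⁻¹ = 2 * π * v := by field_simp
  rw [h2]
  field_simp

private lemma tail_le_nonneg (μ : ℝ) (v : ℝ≥0) (hv : v ≠ 0) (t : ℝ) (ht : 0 ≤ t) :
    ∫ x in Set.Ici (μ + t), gaussianPDFReal μ v x ≤ Real.exp (-t^2/(2*v)) / 2 := by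
  have hv' : (0:ℝ) < v := lt_of_le_of_ne v.2 (by exact_mod_cast hv.symm)
  have hptw : ∀ x ∈ Set.Ici (μ + t),
      gaussianPDFReal μ v x ≤ Real.exp (-t^2/(2*v)) * gaussianPDFReal (μ + t) v x := by
    intro x hx
    simp only [Set.mem_Ici] at hx
    rw [gaussianPDFReal, gaussianPDFReal]
    have key : rexp (-(x - μ)^2/(2*(v:ℝ)))
        ≤ rexp (-t^2/(2*(v:ℝ))) * rexp (-(x - (μ + t))^2/(2*(v:ℝ))) := by
      rw [← Real.exp_add, Real.exp_le_exp, ← add_div,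
        div_le_div_iff₀ (by positivity) (by positivity)]
      nlinarith [mul_nonneg ht (sub_nonneg.2 hx)]
    calc (√(2 * π * (v:ℝ)))⁻¹ * rexp (-(x - μ)^2/(2*(v:ℝ)))
        ≤ (√(2 * π * (v:ℝ)))⁻¹ * (rexp (-t^2/(2*(v:ℝ))) * rexp (-(x - (μ + t))^2/(2*(v:ℝ)))) :=
          mul_le_mul_of_nonneg_left key (by positivity)
      _ = rexp (-t^2/(2*(v:ℝ))) * ((√(2 * π * (v:ℝ)))⁻¹ * rexp (-(x - (μ + t))^2/(2*(v:ℝ)))) := by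
          ring
  calc ∫ x in Set.Ici (μ + t), gaussianPDFReal μ v x
      ≤ ∫ x in Set.Ici (μ + t), Real.exp (-t^2/(2*v)) * gaussianPDFReal (μ + t) v x := by
        refine setIntegral_mono_on ((integrable_gaussianPDFReal μ v).restrict) ?_ measurableSet_Ici hptw
        exact ((integrable_gaussianPDFReal (μ+t) v).restrict).const_mul _
    _ = Real.exp (-t^2/(2*v)) * (1/2) := by
        rw [MeasureTheory.integral_const_mul, half_integral (μ+t) v hv]
    _ = Real.exp (-t^2/(2*v)) / 2 := by ring

private lemma tail_le_neg (μ : ℝ) (v : ℝ≥0) (hv : v ≠ 0) (t : ℝ) (ht : t < 0) :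
    ∫ x in Set.Ici (μ + t), gaussianPDFReal μ v x ≤ 1/2 + (-t) * (√(2 * π * v))⁻¹ := by
  have hv' : (0:ℝ) < v := lt_of_le_of_ne v.2 (by exact_mod_cast hv.symm)
  have hs : (0:ℝ) < Real.sqrt (2 * π * v) := Real.sqrt_pos.2 (by positivity)
  have hsplit : Set.Ici (μ + t) = Set.Ico (μ + t) μ ∪ Set.Ici μ := by
    rw [Set.Ico_union_Ici_eq_Ici]; linarith
  have hdisj : Disjoint (Set.Ico (μ + t) μ) (Set.Ici μ) :=
    Set.disjoint_left.2 (fun x hx hx2 => absurd hx2 (not_le.2 hx.2))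
  rw [hsplit, setIntegral_union hdisj measurableSet_Ici
    ((integrable_gaussianPDFReal μ v).restrict) ((integrable_gaussianPDFReal μ v).restrict),
    half_integral μ v hv]
  rw [add_comm]
  gcongr
  calc ∫ x in Set.Ico (μ + t) μ, gaussianPDFReal μ v x
      ≤ ∫ _x in Set.Ico (μ + t) μ, (√(2 * π * v))⁻¹ := by
        refine setIntegral_mono_on ((integrable_gaussianPDFReal μ v).restrict)
          (integrableOn_const measure_Ico_lt_top.ne) measurableSet_Ico ?_
        intro x _
        rw [gaussianPDFReal]
        nth_rewrite 2 [← mul_one ((√(2 * π * v))⁻¹)]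
        refine mul_le_mul_of_nonneg_left ?_ (by positivity)
        refine Real.exp_le_one_iff.2 ?_
        rw [neg_div]
        exact neg_nonpos.2 (by positivity)
    _ = (-t) * (√(2 * π * v))⁻¹ := by
        rw [setIntegral_const, measureReal_def, Real.volume_Ico, smul_eq_mul]
        rw [ENNReal.toReal_ofReal (by linarith)]
        ring_nf

private lemma left_tail_eq (μ t : ℝ) (v : ℝ≥0) :
    ∫ x in Set.Iic (μ - t), gaussianPDFReal μ v x
      = ∫ x in Set.Ici (μ + t), gaussianPDFReal μ v x := by
  have hmp : MeasurePreserving (fun x : ℝ => 2*μ - x) volume volume := by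
    have hfun : (fun x : ℝ => 2*μ - x) = (fun y : ℝ => y + 2*μ) ∘ (fun x : ℝ => -x) := by
      funext x; simp [Function.comp]; ring
    rw [hfun]
    exact (measurePreserving_add_right volume (2*μ)).comp (Measure.measurePreserving_neg volume)
  have hemb : MeasurableEmbedding (fun x : ℝ => 2*μ - x) :=
    (Homeomorph.subLeft (2*μ)).isClosedEmbedding.measurableEmbedding
  have h := hmp.setIntegral_preimage_emb hemb (gaussianPDFReal μ v) (Set.Iic (μ - t))
  rw [← h]
  have hpre : (fun x : ℝ => 2*μ - x) ⁻¹' Set.Iic (μ - t) = Set.Ici (μ + t) := by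
    ext x; simp only [Set.mem_preimage, Set.mem_Iic, Set.mem_Ici]; constructor <;> intro <;> linarith
  rw [hpre]
  congr 1
  funext x
  rw [gaussianPDFReal, gaussianPDFReal]
  ring_nf

-- the key arithmetic tail bound
private lemma tail_delta (μ Δ ε δ : ℝ) (hΔ : 0 < Δ) (hε : 0 < ε) (hε1 : ε < 1)
    (hδ : 0 < δ) (hδ1 : δ < 1) (σ2 : NNReal)
    (hσ2 : (σ2 : ℝ) = 2 * Δ^2 * Real.log (1.25/δ) / ε^2) :
    ∫ x in Set.Ici (μ + ((σ2:ℝ) * ε / Δ - Δ/2)), gaussianPDFReal μ σ2 x ≤ δ := by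
  set r := Real.log (1.25/δ) with hr_def
  have hr : 0 < r := Real.log_pos (by rw [lt_div_iff₀ hδ]; linarith)
  have hv0 : (0:ℝ) < σ2 := by rw [hσ2]; positivity
  have hv : σ2 ≠ 0 := by
    intro h; rw [h] at hv0; simp at hv0
  have hexp_r : Real.exp r = 1.25/δ := Real.exp_log (by positivity)
  -- r ≥ 1/5
  have hr5 : 1/5 ≤ r := by
    have h1 : Real.log (1.25 : ℝ) ≤ r := by
      apply Real.log_le_log (by norm_num)
      rw [le_div_iff₀ hδ]; nlinarith
    have h2 : Real.log ((0.8:ℝ)) ≤ (0.8:ℝ) - 1 := Real.log_le_sub_one_of_pos (by norm_num)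
    have h3 : Real.log ((1.25:ℝ)) = - Real.log ((0.8:ℝ)) := by
      rw [← Real.log_inv]; norm_num
    linarith
  set t₀ : ℝ := (σ2:ℝ) * ε / Δ - Δ/2 with ht₀_def
  have ht₀' : t₀ = Δ * (4*r - ε) / (2*ε) := by
    rw [ht₀_def, hσ2]; field_simp; ring
  clear_value t₀
  rcases le_or_gt 0 t₀ with ht | ht
  · -- main case
    refine (tail_le_nonneg μ σ2 hv t₀ ht).trans ?_
    -- exp(-t₀²/(2σ2)) ≤ 2δ
    have hid : t₀^2/(2*(σ2:ℝ)) = (4*r-ε)^2/(16*r) := by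
      rw [ht₀', hσ2]; field_simp; ring
    have hlog25 : (3/5 : ℝ) ≤ Real.log (2.5 : ℝ) := by
      have h2 : Real.log ((0.4:ℝ)) ≤ (0.4:ℝ) - 1 := Real.log_le_sub_one_of_pos (by norm_num)
      have h3 : Real.log ((2.5:ℝ)) = - Real.log ((0.4:ℝ)) := by
        rw [← Real.log_inv]; norm_num
      linarith
    have hkey : r - Real.log 2.5 ≤ t₀^2/(2*(σ2:ℝ)) := by
      rw [hid, le_div_iff₀ (by positivity)]
      nlinarith [mul_le_mul_of_nonneg_left hε1.le (by linarith : (0:ℝ) ≤ 8*r),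
        mul_le_mul_of_nonneg_right hlog25 hr.le, sq_nonneg ε]
    have hexp : Real.exp (-t₀^2/(2*(σ2:ℝ))) ≤ 2*δ := by
      have h1 : Real.exp (-t₀^2/(2*(σ2:ℝ))) ≤ Real.exp (Real.log 2.5 - r) := by
        rw [Real.exp_le_exp, neg_div]; linarith
      have h2 : Real.exp (Real.log 2.5 - r) = 2*δ := by
        rw [Real.exp_sub, Real.exp_log (by norm_num : (0:ℝ) < 2.5), hexp_r]
        field_simp; ring
      linarith
    linarith
  · -- t₀ < 0 case
    refine (tail_le_neg μ σ2 hv t₀ ht).trans ?_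
    have h4r : 4*r < ε := by
      by_contra h
      push_neg at h
      have : 0 ≤ t₀ := by
        rw [ht₀']
        exact div_nonneg (mul_nonneg hΔ.le (by linarith)) (by positivity)
      linarith
    have hδlb : 1.25 * (1 - r) ≤ δ := by
      have hexpneg : 1 - r ≤ Real.exp (-r) := by
        have := Real.add_one_le_exp (-r); linarith
      have : (1 - r) * Real.exp r ≤ 1 := by
        have hmul : (1 - r) * Real.exp r ≤ Real.exp (-r) * Real.exp r :=
          mul_le_mul_of_nonneg_right hexpneg (Real.exp_pos r).le
        rwa [← Real.exp_add, neg_add_cancel, Real.exp_zero] at hmul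
      calc 1.25 * (1 - r) = δ * Real.exp r * (1 - r) := by rw [hexp_r]; field_simp
        _ ≤ δ * 1 := by rw [mul_assoc]; exact mul_le_mul_of_nonneg_left (by nlinarith) hδ.le
        _ = δ := mul_one δ
    have hrq : r < 1/4 := by linarith
    -- (-t₀) * (√(2πσ2))⁻¹ ≤ 1/10
    have hπ : (3:ℝ) < π := Real.pi_gt_three
    have hsq : (0:ℝ) < √(2 * π * σ2) := Real.sqrt_pos.2 (by positivity)
    have hbound : (-t₀) * (√(2 * π * (σ2:ℝ)))⁻¹ ≤ 1/10 := by
      have h100 : (10 * (-t₀))^2 ≤ 2 * π * (σ2:ℝ) := by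
        have ht₀sq : t₀^2 = Δ^2 * (ε - 4*r)^2/(4*ε^2) := by rw [ht₀']; field_simp; ring
        have hσ2' : 2 * π * (σ2:ℝ) = 4 * π * Δ^2 * r / ε^2 := by rw [hσ2]; ring
        rw [hσ2']
        have hmain : 25 * (ε - 4*r)^2 ≤ 4 * π * r := by
          have h1 : ε - 4*r ≤ 1/5 := by linarith
          have h2 : 0 < ε - 4*r := by linarith
          nlinarith
        have heq : (10 * (-t₀))^2 = (25 * (ε - 4*r)^2) * Δ^2 / ε^2 := by
          rw [show (10 * (-t₀))^2 = 100 * t₀^2 from by ring, ht₀sq]; ring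
        rw [heq, div_le_div_iff₀ (by positivity) (by positivity)]
        have hstep := mul_le_mul_of_nonneg_right
          (mul_le_mul_of_nonneg_right hmain (sq_nonneg Δ)) (sq_nonneg ε)
        linarith [hstep]
      have hle : 10 * (-t₀) ≤ √(2 * π * (σ2:ℝ)) :=
        Real.le_sqrt_of_sq_le h100
      rw [mul_inv_le_iff₀ hsq]
      linarith
    linarith

private theorem gauss_mech (μ ν Δ : ℝ) (hΔ : 0 < Δ) (hd : |μ - ν| ≤ Δ)
    (ε δ : ℝ) (hε : 0 < ε) (hε1 : ε < 1) (hδ : 0 < δ) (hδ1 : δ < 1)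
    (σ2 : NNReal) (hσ2 : (σ2:ℝ) = 2*Δ^2*Real.log (1.25/δ)/ε^2)
    (s : Set ℝ) (hs : MeasurableSet s) :
    gaussianReal μ σ2 s ≤ ENNReal.ofReal (Real.exp ε) * gaussianReal ν σ2 s
      + ENNReal.ofReal δ := by
  have hr : 0 < Real.log (1.25/δ) := Real.log_pos (by rw [lt_div_iff₀ hδ]; linarith)
  have hv0 : (0:ℝ) < σ2 := by rw [hσ2]; positivity
  have hv : σ2 ≠ 0 := by intro h; rw [h] at hv0; simp at hv0
  set t₀ : ℝ := (σ2:ℝ) * ε / Δ - Δ/2 with ht₀_def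
  set A : Set ℝ := {x | Real.exp ε * gaussianPDFReal ν σ2 x < gaussianPDFReal μ σ2 x} with hA
  have hAmeas : MeasurableSet A :=
    measurableSet_lt (measurable_const.mul (measurable_gaussianPDFReal ν σ2))
      (measurable_gaussianPDFReal μ σ2)
  -- tail bound for A
  have hAtail : gaussianReal μ σ2 A ≤ ENNReal.ofReal δ := by
    -- x ∈ A implies ε * (2σ2) < (x-ν)^2 - (x-μ)^2
    have hkey : ∀ x ∈ A, ε * (2*(σ2:ℝ)) < (x-ν)^2 - (x-μ)^2 := by
      intro x hx
      rw [hA, Set.mem_setOf_eq, gaussianPDFReal, gaussianPDFReal] at hx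
      have hC : (0:ℝ) < (√(2 * π * σ2))⁻¹ := by positivity
      have h2 : Real.exp (ε + -(x-ν)^2/(2*(σ2:ℝ))) < Real.exp (-(x-μ)^2/(2*(σ2:ℝ))) := by
        have : (√(2 * π * (σ2:ℝ)))⁻¹ * Real.exp (ε + -(x-ν)^2/(2*(σ2:ℝ)))
            < (√(2 * π * (σ2:ℝ)))⁻¹ * Real.exp (-(x-μ)^2/(2*(σ2:ℝ))) := by
          rw [Real.exp_add]
          calc (√(2 * π * (σ2:ℝ)))⁻¹ * (Real.exp ε * Real.exp (-(x-ν)^2/(2*(σ2:ℝ))))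
              = Real.exp ε * ((√(2 * π * (σ2:ℝ)))⁻¹ * Real.exp (-(x-ν)^2/(2*(σ2:ℝ)))) := by ring
            _ < (√(2 * π * (σ2:ℝ)))⁻¹ * Real.exp (-(x-μ)^2/(2*(σ2:ℝ))) := hx
        exact lt_of_mul_lt_mul_left this hC.le
      have h3 := Real.exp_lt_exp.1 h2
      have h2v : (0:ℝ) < 2*(σ2:ℝ) := by positivity
      have h4 : ε < ((x-ν)^2 - (x-μ)^2)/(2*(σ2:ℝ)) := by
        have : ((x-ν)^2 - (x-μ)^2)/(2*(σ2:ℝ))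
            = -(x-μ)^2/(2*(σ2:ℝ)) - -(x-ν)^2/(2*(σ2:ℝ)) := by ring
        rw [this]; linarith
      calc ε * (2*(σ2:ℝ)) < ((x-ν)^2 - (x-μ)^2)/(2*(σ2:ℝ)) * (2*(σ2:ℝ)) := by
            exact mul_lt_mul_of_pos_right h4 h2v
        _ = (x-ν)^2 - (x-μ)^2 := by field_simp
    rcases lt_trichotomy μ ν with hlt | heq | hgt
    · -- d < 0 : A ⊆ {x | x ≤ μ - t₀}
      have hsub : A ⊆ Set.Iic (μ - t₀) := by
        intro x hx
        have h5 := hkey x hx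
        have hd1 : 0 < ν - μ := by linarith
        have hd2 : ν - μ ≤ Δ := by rw [abs_le] at hd; linarith [hd.1]
        simp only [Set.mem_Iic]
        -- (x-ν)² - (x-μ)² = (μ-ν)(2x-μ-ν) ; with d' = ν-μ : 2d'(μ-x) + d'² > 2σ2ε
        have h6 : 2*(ν-μ)*(μ-x) + (ν-μ)^2 > ε * (2*(σ2:ℝ)) := by nlinarith
        -- μ - x > σ2 ε/(ν-μ) - (ν-μ)/2 ≥ t₀
        have h7 : (σ2:ℝ)*ε/Δ*Δ = (σ2:ℝ)*ε := div_mul_cancel₀ _ (ne_of_gt hΔ)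
        rw [ht₀_def]
        nlinarith [mul_pos hv0 hε, mul_nonneg (sub_nonneg.2 hd2)
          (div_pos (mul_pos hv0 hε) hΔ).le, mul_pos hd1 (div_pos (mul_pos hv0 hε) hΔ)]
      calc gaussianReal μ σ2 A ≤ gaussianReal μ σ2 (Set.Iic (μ - t₀)) :=
            measure_mono hsub
        _ = ENNReal.ofReal (∫ x in Set.Iic (μ - t₀), gaussianPDFReal μ σ2 x) :=
            gaussianReal_apply_eq_integral μ hv _
        _ ≤ ENNReal.ofReal δ := by
            rw [left_tail_eq]
            exact ENNReal.ofReal_le_ofReal (tail_delta μ Δ ε δ hΔ hε hε1 hδ hδ1 σ2 hσ2)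
    · -- μ = ν : A empty
      have hempty : A = ∅ := by
        ext x
        simp only [hA, Set.mem_setOf_eq, Set.mem_empty_iff_false, iff_false, not_lt, heq]
        nth_rewrite 1 [show gaussianPDFReal ν σ2 x = 1 * gaussianPDFReal ν σ2 x from (one_mul _).symm]
        exact mul_le_mul_of_nonneg_right (Real.one_le_exp hε.le) (gaussianPDFReal_nonneg ν σ2 x)
      rw [hempty]
      simp only [measure_empty]
      positivity
    · -- d > 0 : A ⊆ {x | μ + t₀ ≤ x}
      have hsub : A ⊆ Set.Ici (μ + t₀) := by
        intro x hx
        have h5 := hkey x hx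
        have hd1 : 0 < μ - ν := by linarith
        have hd2 : μ - ν ≤ Δ := by rw [abs_le] at hd; linarith [hd.2]
        simp only [Set.mem_Ici]
        have h6 : 2*(μ-ν)*(x-μ) + (μ-ν)^2 > ε * (2*(σ2:ℝ)) := by nlinarith
        have h7 : (σ2:ℝ)*ε/Δ*Δ = (σ2:ℝ)*ε := div_mul_cancel₀ _ (ne_of_gt hΔ)
        rw [ht₀_def]
        nlinarith [mul_pos hv0 hε, mul_nonneg (sub_nonneg.2 hd2)
          (div_pos (mul_pos hv0 hε) hΔ).le, mul_pos hd1 (div_pos (mul_pos hv0 hε) hΔ)]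
      calc gaussianReal μ σ2 A ≤ gaussianReal μ σ2 (Set.Ici (μ + t₀)) :=
            measure_mono hsub
        _ = ENNReal.ofReal (∫ x in Set.Ici (μ + t₀), gaussianPDFReal μ σ2 x) :=
            gaussianReal_apply_eq_integral μ hv _
        _ ≤ ENNReal.ofReal δ :=
            ENNReal.ofReal_le_ofReal (tail_delta μ Δ ε δ hΔ hε hε1 hδ hδ1 σ2 hσ2)
  -- main decomposition
  have hsplit : gaussianReal μ σ2 s
      = gaussianReal μ σ2 (s ∩ A) + gaussianReal μ σ2 (s \ A) :=
    (measure_inter_add_diff s hAmeas).symm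
  rw [hsplit]
  have hb1 : gaussianReal μ σ2 (s ∩ A) ≤ ENNReal.ofReal δ :=
    (measure_mono Set.inter_subset_right).trans hAtail
  have hb2 : gaussianReal μ σ2 (s \ A)
      ≤ ENNReal.ofReal (Real.exp ε) * gaussianReal ν σ2 s := by
    rw [gaussianReal_apply μ hv, gaussianReal_apply ν hv]
    calc ∫⁻ x in s \ A, gaussianPDF μ σ2 x
        ≤ ∫⁻ x in s \ A, ENNReal.ofReal (Real.exp ε) * gaussianPDF ν σ2 x := by
          refine setLIntegral_mono ((measurable_gaussianPDF ν σ2).const_mul _) ?_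
          intro x hx
          have hxA : x ∉ A := hx.2
          rw [hA, Set.mem_setOf_eq, not_lt] at hxA
          rw [gaussianPDF, gaussianPDF, ← ENNReal.ofReal_mul (Real.exp_pos ε).le]
          exact ENNReal.ofReal_le_ofReal hxA
      _ = ENNReal.ofReal (Real.exp ε) * ∫⁻ x in s \ A, gaussianPDF ν σ2 x :=
          lintegral_const_mul _ (measurable_gaussianPDF ν σ2)
      _ ≤ ENNReal.ofReal (Real.exp ε) * ∫⁻ x in s, gaussianPDF ν σ2 x := by
          gcongr
          exact Set.diff_subset
  calc gaussianReal μ σ2 (s ∩ A) + gaussianReal μ σ2 (s \ A)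
      ≤ ENNReal.ofReal δ + ENNReal.ofReal (Real.exp ε) * gaussianReal ν σ2 s :=
        add_le_add hb1 hb2
    _ = ENNReal.ofReal (Real.exp ε) * gaussianReal ν σ2 s + ENNReal.ofReal δ := add_comm _ _

end DPAuxLemmas

open scoped NNReal in
/-- Differential privacy for a novel client: the deep-set encoder
`g(D) = ψ((1/n) • ∑ i, φ (D i))` has sensitivity at most `2LB/n` (Lemma 1), so
releasing the embedding perturbed by Gaussian noise with variance
`σ² = 2 (2LB/n)² log(1.25/δ) / ε²` satisfies `(ε, δ)`-differential privacy:
for adjacent datasets `D, D'` and any measurable `s`,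
`N(g(D), σ²)(s) ≤ e^ε · N(g(D'), σ²)(s) + δ`. -/
theorem deepset_encoder_gaussian_mechanism_dp
    {E : Type*} [NormedAddCommGroup E] [NormedSpace ℝ E]
    {X : Type*} {n : ℕ} (hn : 1 ≤ n)
    (φ : X → E) (B : ℝ) (hB : 0 < B) (hφ : ∀ x : X, ‖φ x‖ ≤ B)
    (ψ : E →ₗ[ℝ] ℝ) (L : ℝ) (hL : 0 < L)
    (hψ : ∀ u v : E, ‖ψ u - ψ v‖ ≤ L * ‖u - v‖)
    (g : (Fin n → X) → ℝ)
    (hg : ∀ D : Fin n → X, g D = ψ ((1 / (n : ℝ)) • ∑ i : Fin n, φ (D i)))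
    (ε δ : ℝ) (hε : 0 < ε) (hε1 : ε < 1) (hδ : 0 < δ) (hδ1 : δ < 1)
    (σ2 : NNReal)
    (hσ2 : (σ2 : ℝ) = 2 * (2 * L * B / (n : ℝ)) ^ 2 * Real.log (1.25 / δ) / ε ^ 2)
    (D D' : Fin n → X)
    (hadj : ∃ j : Fin n, ∀ i : Fin n, i ≠ j → D i = D' i)
    (s : Set ℝ) (hs : MeasurableSet s) :
    gaussianReal (g D) σ2 s
      ≤ ENNReal.ofReal (Real.exp ε) * gaussianReal (g D') σ2 s
        + ENNReal.ofReal δ := by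
  have hn' : (0:ℝ) < n := by exact_mod_cast Nat.lt_of_lt_of_le Nat.zero_lt_one hn
  set Δ : ℝ := 2 * L * B / (n : ℝ) with hΔ_def
  have hΔ : 0 < Δ := by rw [hΔ_def]; positivity
  obtain ⟨j, hj⟩ := hadj
  -- sensitivity
  have hsens : |g D - g D'| ≤ Δ := by
    rw [hg D, hg D']
    have hsum : (∑ i : Fin n, φ (D i)) - ∑ i : Fin n, φ (D' i)
        = φ (D j) - φ (D' j) := by
      rw [← Finset.sum_sub_distrib]
      rw [Finset.sum_eq_single j (fun i _ hij => by rw [hj i hij, sub_self]) (by simp)]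
    have hlin : ψ ((1 / (n : ℝ)) • ∑ i : Fin n, φ (D i))
        - ψ ((1 / (n : ℝ)) • ∑ i : Fin n, φ (D' i))
        = ψ ((1 / (n : ℝ)) • ∑ i : Fin n, φ (D i)) - ψ ((1 / (n : ℝ)) • ∑ i : Fin n, φ (D' i)) := rfl
    rw [← Real.norm_eq_abs]
    refine (hψ _ _).trans ?_
    rw [← smul_sub, hsum, norm_smul]
    have h2B : ‖φ (D j) - φ (D' j)‖ ≤ 2 * B :=
      (norm_sub_le _ _).trans (by linarith [hφ (D j), hφ (D' j)])
    have hnorm1n : ‖(1 / (n:ℝ))‖ = 1/(n:ℝ) := by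
      rw [Real.norm_eq_abs, abs_of_pos (by positivity)]
    rw [hnorm1n, hΔ_def]
    calc L * (1/(n:ℝ) * ‖φ (D j) - φ (D' j)‖) ≤ L * (1/(n:ℝ) * (2*B)) := by
          gcongr
      _ = 2*L*B/(n:ℝ) := by ring
  exact gauss_mech (g D) (g D') Δ hΔ hsens ε δ hε hε1 hδ hδ1 σ2 (by rw [hσ2, hΔ_def]) s hs
end
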